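/- Define the 3-periodic bicomplex sequence BCV_n := V_n + i·V_{n+1} + j·V_{n+2} + ij·V_{n+3}. Then for all n, 7·BC_n = Ĥ·2^{n+1} - BCV_n, where Ĥ = 1 + 2i + 4j + 8ij. -/
import Mathlib


@[ext]
structure Bicomplex (R : Type) where
  a : R
  b : R
  c : R
  d : R

namespace Bicomplex
variable {R : Type} [CommRing R]

instance : Add (Bicomplex R) := ⟨fun w v => ⟨w.a + v.a, w.b + v.b, w.c + v.c, w.d + v.d⟩⟩
instance : Neg (Bicomplex R) := ⟨fun w => ⟨-w.a, -w.b, -w.c, -w.d⟩⟩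
instance : Zero (Bicomplex R) := ⟨⟨0, 0, 0, 0⟩⟩
instance : One (Bicomplex R) := ⟨⟨1, 0, 0, 0⟩⟩
instance : Mul (Bicomplex R) :=
  ⟨fun w v =>
    ⟨w.a * v.a - w.b * v.b - w.c * v.c + w.d * v.d,
     w.a * v.b + w.b * v.a - w.c * v.d - w.d * v.c,
     w.a * v.c - w.b * v.d + w.c * v.a - w.d * v.b,
     w.a * v.d + w.b * v.c + w.c * v.b + w.d * v.a⟩⟩

@[simp] theorem add_a (w v : Bicomplex R) : (w + v).a = w.a + v.a := rfl
@[simp] theorem add_b (w v : Bicomplex R) : (w + v).b = w.b + v.b := rfl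
@[simp] theorem add_c (w v : Bicomplex R) : (w + v).c = w.c + v.c := rfl
@[simp] theorem add_d (w v : Bicomplex R) : (w + v).d = w.d + v.d := rfl
@[simp] theorem neg_a (w : Bicomplex R) : (-w).a = -w.a := rfl
@[simp] theorem neg_b (w : Bicomplex R) : (-w).b = -w.b := rfl
@[simp] theorem neg_c (w : Bicomplex R) : (-w).c = -w.c := rfl
@[simp] theorem neg_d (w : Bicomplex R) : (-w).d = -w.d := rfl
@[simp] theorem zero_a : (0 : Bicomplex R).a = 0 := rfl
@[simp] theorem zero_b : (0 : Bicomplex R).b = 0 := rfl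
@[simp] theorem zero_c : (0 : Bicomplex R).c = 0 := rfl
@[simp] theorem zero_d : (0 : Bicomplex R).d = 0 := rfl
@[simp] theorem one_a : (1 : Bicomplex R).a = 1 := rfl
@[simp] theorem one_b : (1 : Bicomplex R).b = 0 := rfl
@[simp] theorem one_c : (1 : Bicomplex R).c = 0 := rfl
@[simp] theorem one_d : (1 : Bicomplex R).d = 0 := rfl
@[simp] theorem mul_a (w v : Bicomplex R) :
    (w * v).a = w.a * v.a - w.b * v.b - w.c * v.c + w.d * v.d := rfl
@[simp] theorem mul_b (w v : Bicomplex R) :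
    (w * v).b = w.a * v.b + w.b * v.a - w.c * v.d - w.d * v.c := rfl
@[simp] theorem mul_c (w v : Bicomplex R) :
    (w * v).c = w.a * v.c - w.b * v.d + w.c * v.a - w.d * v.b := rfl
@[simp] theorem mul_d (w v : Bicomplex R) :
    (w * v).d = w.a * v.d + w.b * v.c + w.c * v.b + w.d * v.a := rfl

instance : CommRing (Bicomplex R) where
  add_assoc w v u := by ext <;> simp <;> ring
  zero_add w := by ext <;> simp
  add_zero w := by ext <;> simp
  add_comm w v := by ext <;> simp <;> ring
  neg_add_cancel w := by ext <;> simp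
  left_distrib w v u := by ext <;> simp <;> ring
  right_distrib w v u := by ext <;> simp <;> ring
  zero_mul w := by ext <;> simp
  mul_zero w := by ext <;> simp
  mul_assoc w v u := by ext <;> simp <;> ring
  one_mul w := by ext <;> simp
  mul_one w := by ext <;> simp
  mul_comm w v := by ext <;> simp <;> ring
  nsmul := nsmulRec
  zsmul := zsmulRec

end Bicomplex

def J3 : ℕ → ℤ
  | 0 => 0
  | 1 => 1
  | 2 => 1
  | (n + 3) => J3 (n + 2) + J3 (n + 1) + 2 * J3 n

def V3 (n : ℕ) : ℤ := if n % 3 = 0 then 2 else if n % 3 = 1 then -3 else 1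

/-- The bicomplex third-order Jacobsthal quaternion `J_n + i·J_{n+1} + j·J_{n+2} + ij·J_{n+3}`. -/
def BCJ (n : ℕ) : Bicomplex ℤ := ⟨J3 n, J3 (n + 1), J3 (n + 2), J3 (n + 3)⟩

/-- The 3-periodic bicomplex sequence `V_n + i·V_{n+1} + j·V_{n+2} + ij·V_{n+3}`. -/
def BCV (n : ℕ) : Bicomplex ℤ := ⟨V3 n, V3 (n + 1), V3 (n + 2), V3 (n + 3)⟩

/-- `Ĥ = 1 + 2i + 4j + 8ij`. -/
def Hhat : Bicomplex ℤ := ⟨1, 2, 4, 8⟩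

lemma V3_add_three (n : ℕ) : V3 (n + 3) = V3 n := by
  simp [V3, Nat.add_mod]

lemma V3_rec (n : ℕ) : V3 (n + 2) + V3 (n + 1) + 2 * V3 n = V3 (n + 3) := by
  have h0 := Nat.mod_lt n (show 0 < 3 by norm_num)
  unfold V3
  rcases (by omega : n % 3 = 0 ∨ n % 3 = 1 ∨ n % 3 = 2) with h | h | h <;>
    simp [Nat.add_mod, h]

lemma key (n : ℕ) : 7 * J3 n = 2 ^ (n + 1) - V3 n := by
  induction n using Nat.strong_induction_on with
  | _ n ih =>
    match n with
    | 0 => decide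
    | 1 => decide
    | 2 => decide
    | (m + 3) =>
      have h0 := ih m (by omega)
      have h1 := ih (m + 1) (by omega)
      have h2 := ih (m + 2) (by omega)
      have hv := V3_rec m
      rw [show J3 (m + 3) = J3 (m + 2) + J3 (m + 1) + 2 * J3 m from rfl]
      have p : (2 : ℤ) ^ (m + 3 + 1) = 2 ^ (m + 2 + 1) + 2 ^ (m + 1 + 1) + 2 * 2 ^ (m + 1) := by
        ring
      linarith

lemma two_pow_comp (k : ℕ) : (2 : Bicomplex ℤ) ^ k = ⟨2 ^ k, 0, 0, 0⟩ := by
  induction k with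
  | zero => rfl
  | succ k ih =>
    rw [pow_succ, pow_succ, ih, show (2 : Bicomplex ℤ) = ⟨2, 0, 0, 0⟩ from rfl]
    ext <;> simp

lemma seven_comp : (7 : Bicomplex ℤ) = ⟨7, 0, 0, 0⟩ := by
  rw [show (7 : Bicomplex ℤ) = 1 + 1 + 1 + 1 + 1 + 1 + 1 by norm_num]
  ext <;> simp

theorem binet_BCJ (n : ℕ) : 7 * BCJ n = Hhat * 2 ^ (n + 1) - BCV n := by
  have k0 := key n
  have k1 := key (n + 1)
  have k2 := key (n + 2)
  have k3 := key (n + 3)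
  have e1 : (2 : ℤ) ^ (n + 1 + 1) = 2 * 2 ^ (n + 1) := by ring
  have e2 : (2 : ℤ) ^ (n + 2 + 1) = 4 * 2 ^ (n + 1) := by ring
  have e3 : (2 : ℤ) ^ (n + 3 + 1) = 8 * 2 ^ (n + 1) := by ring
  have hv : V3 (n + 3 + 3) = V3 (n + 3) := V3_add_three (n + 3)
  rw [two_pow_comp, seven_comp, sub_eq_add_neg]
  ext <;> simp [BCJ, BCV, Hhat] <;> linarith
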